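/- Let A ⊆ ℝ^n be a finite s-distance set. Then every standard monomial of the vanishing ideal I(A) with respect to the deglex term order has degree at most s. -/

import Mathlib

noncomputable section

open MvPolynomial

/-- The set of nonzero distances determined by a set `A` in Euclidean space. -/
def distSet {n : ℕ} (A : Set (EuclideanSpace ℝ (Fin n))) : Set ℝ :=
  {d | ∃ p ∈ A, ∃ q ∈ A, p ≠ q ∧ dist p q = d}

/-- The strict degree-lexicographic order on exponent vectors: compare first by
total degree, then lexicographically. -/
def degLexLT {n : ℕ} (u v : Fin n →₀ ℕ) : Prop :=
  (∑ i, u i) < (∑ i, v i) ∨ ((∑ i, u i) = (∑ i, v i) ∧ toLex u < toLex v)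

/-- `m` is the leading monomial of `f` with respect to the strict order `lt`. -/
def IsLeadingMonomial {K : Type*} [CommSemiring K] {n : ℕ}
    (lt : (Fin n →₀ ℕ) → (Fin n →₀ ℕ) → Prop)
    (f : MvPolynomial (Fin n) K) (m : Fin n →₀ ℕ) : Prop :=
  m ∈ f.support ∧ ∀ m' ∈ f.support, m' ≠ m → lt m' m

open Finset in
private lemma expand_pow_dist (n k s : ℕ) (hk : k ≤ s) :
    ∃ (ι : Type) (I : Finset ι) (P Q : ι → MvPolynomial (Fin n) ℝ),
      (∀ c ∈ I, (P c).totalDegree ≤ s ∨ (Q c).totalDegree ≤ s) ∧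
      ∀ x y : Fin n → ℝ,
        (∑ i, (x i - y i) ^ 2) ^ k = ∑ c ∈ I, eval x (P c) * eval y (Q c) := by
  classical
  refine ⟨(Fin k → Fin n) × Finset (Fin k) × Finset (Fin k), Finset.univ,
    fun c => (∏ t ∈ c.2.1, X (c.1 t)) * ∏ t ∈ c.2.2, X (c.1 t),
    fun c => (∏ t ∈ univ \ c.2.1, (-X (c.1 t))) * ∏ t ∈ univ \ c.2.2, (-X (c.1 t)),
    ?_, ?_⟩
  · rintro ⟨g, S, T⟩ -
    have hS : S.card ≤ k := by simpa using Finset.card_le_univ S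
    have hT : T.card ≤ k := by simpa using Finset.card_le_univ T
    have degX : ∀ (U : Finset (Fin k)), (∏ t ∈ U, (X (g t) : MvPolynomial (Fin n) ℝ)).totalDegree ≤ U.card := by
      intro U
      refine (MvPolynomial.totalDegree_finset_prod U _).trans ?_
      simp [MvPolynomial.totalDegree_X]
    have degXn : ∀ (U : Finset (Fin k)), (∏ t ∈ U, (-X (g t) : MvPolynomial (Fin n) ℝ)).totalDegree ≤ U.card := by
      intro U
      refine (MvPolynomial.totalDegree_finset_prod U _).trans ?_
      simp [MvPolynomial.totalDegree_neg, MvPolynomial.totalDegree_X]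
    by_cases h : S.card + T.card ≤ k
    · left
      exact (MvPolynomial.totalDegree_mul _ _).trans
        (le_trans (add_le_add (degX S) (degX T)) (h.trans hk))
    · right
      refine (MvPolynomial.totalDegree_mul _ _).trans
        (le_trans (add_le_add (degXn _) (degXn _)) ?_)
      have c1 : (univ \ S).card = k - S.card := by simp [Finset.card_sdiff_of_subset (Finset.subset_univ S)]
      have c2 : (univ \ T).card = k - T.card := by simp [Finset.card_sdiff_of_subset (Finset.subset_univ T)]
      rw [c1, c2]; omega
  · intro x y
    have evP : ∀ (g : Fin k → Fin n) (U : Finset (Fin k)),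
        eval x (∏ t ∈ U, (X (g t) : MvPolynomial (Fin n) ℝ)) = ∏ t ∈ U, x (g t) := by
      intro g U; rw [map_prod]; simp
    have evQ : ∀ (g : Fin k → Fin n) (U : Finset (Fin k)),
        eval y (∏ t ∈ U, (-X (g t) : MvPolynomial (Fin n) ℝ)) = ∏ t ∈ U, (-y (g t)) := by
      intro g U; rw [map_prod]; simp
    calc (∑ i, (x i - y i) ^ 2) ^ k
        = ∏ _t : Fin k, (∑ i, (x i - y i) ^ 2) := by
          rw [Finset.prod_const, Finset.card_univ, Fintype.card_fin]
      _ = ∑ g ∈ Fintype.piFinset (fun _ : Fin k => (univ : Finset (Fin n))),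
            ∏ t, (x (g t) - y (g t)) ^ 2 := Finset.prod_univ_sum _ _
      _ = ∑ g : Fin k → Fin n, ∑ S : Finset (Fin k), ∑ T : Finset (Fin k),
            ((∏ t ∈ S, x (g t)) * ∏ t ∈ univ \ S, (-y (g t))) *
            ((∏ t ∈ T, x (g t)) * ∏ t ∈ univ \ T, (-y (g t))) := by
          rw [Fintype.piFinset_univ]
          refine Finset.sum_congr rfl fun g _ => ?_
          have h1 : ∏ t, (x (g t) - y (g t)) ^ 2
              = (∏ t, (x (g t) - y (g t))) * (∏ t, (x (g t) - y (g t))) := by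
            rw [Finset.prod_pow]; ring
          have h2 : (∏ t, (x (g t) - y (g t)))
              = ∑ S ∈ (univ : Finset (Fin k)).powerset,
                  (∏ t ∈ S, x (g t)) * ∏ t ∈ univ \ S, (-y (g t)) := by
            simp only [sub_eq_add_neg]
            exact Finset.prod_add _ _ _
          rw [h1, h2, Finset.sum_mul_sum, Finset.powerset_univ]
      _ = ∑ c : (Fin k → Fin n) × Finset (Fin k) × Finset (Fin k),
            eval x ((∏ t ∈ c.2.1, X (c.1 t)) * ∏ t ∈ c.2.2, X (c.1 t)) *
            eval y ((∏ t ∈ univ \ c.2.1, (-X (c.1 t))) * ∏ t ∈ univ \ c.2.2, (-X (c.1 t))) := by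
          rw [Fintype.sum_prod_type]
          refine Finset.sum_congr rfl fun g _ => ?_
          rw [Fintype.sum_prod_type]
          refine Finset.sum_congr rfl fun S _ => Finset.sum_congr rfl fun T _ => ?_
          rw [map_mul, map_mul, evP, evP, evQ, evQ]
          ring

private lemma sum_comm3 {α β γ M : Type*} [AddCommMonoid M] (s : Finset α) (t : Finset β)
    (u : Finset γ) (f : α → β → γ → M) :
    ∑ a ∈ s, ∑ b ∈ t, ∑ c ∈ u, f a b c = ∑ c ∈ u, ∑ a ∈ s, ∑ b ∈ t, f a b c := by
  calc ∑ a ∈ s, ∑ b ∈ t, ∑ c ∈ u, f a b c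
      = ∑ a ∈ s, ∑ c ∈ u, ∑ b ∈ t, f a b c :=
        Finset.sum_congr rfl fun a _ => Finset.sum_comm
    _ = ∑ c ∈ u, ∑ a ∈ s, ∑ b ∈ t, f a b c := Finset.sum_comm

open Finset in
private lemma core {n s : ℕ} (A : Finset (EuclideanSpace ℝ (Fin n)))
    (hA : (distSet (A : Set (EuclideanSpace ℝ (Fin n)))).ncard ≤ s)
    (lam : {x // x ∈ A} → ℝ)
    (H : ∀ f : MvPolynomial (Fin n) ℝ, f.totalDegree ≤ s →
      ∑ a : {x // x ∈ A}, lam a * eval (fun i => (a : EuclideanSpace ℝ (Fin n)) i) f = 0) :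
    lam = 0 := by
  classical
  set AS := distSet (A : Set (EuclideanSpace ℝ (Fin n))) with hAS
  have hfin : AS.Finite := by
    apply Set.Finite.subset (Set.Finite.image (fun p : _ × _ => dist p.1 p.2)
      (((A : Set (EuclideanSpace ℝ (Fin n))).toFinite).prod (A : Set _).toFinite))
    rintro d ⟨p, hp, q, hq, hpq, rfl⟩
    exact ⟨(p, q), ⟨hp, hq⟩, rfl⟩
  set D : Finset ℝ := hfin.toFinset with hD
  have hDcard : D.card ≤ s := by
    rwa [hD, ← Set.ncard_eq_toFinset_card _ hfin]
  -- step Z : moments of powers of squared distance vanish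
  have Z : ∀ k ≤ s, ∑ a : {x // x ∈ A}, ∑ b : {x // x ∈ A},
      lam a * lam b * (∑ i, ((a : EuclideanSpace ℝ (Fin n)) i - (b : EuclideanSpace ℝ (Fin n)) i) ^ 2) ^ k = 0 := by
    intro k hk
    obtain ⟨ι, I, P, Q, hdeg, hid⟩ := expand_pow_dist n k s hk
    calc ∑ a : {x // x ∈ A}, ∑ b : {x // x ∈ A},
          lam a * lam b * (∑ i, ((a : EuclideanSpace ℝ (Fin n)) i - (b : EuclideanSpace ℝ (Fin n)) i) ^ 2) ^ k
        = ∑ a : {x // x ∈ A}, ∑ b : {x // x ∈ A}, ∑ c ∈ I,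
            (lam a * eval (fun i => (a : EuclideanSpace ℝ (Fin n)) i) (P c)) *
            (lam b * eval (fun i => (b : EuclideanSpace ℝ (Fin n)) i) (Q c)) := by
          refine Finset.sum_congr rfl fun a _ => Finset.sum_congr rfl fun b _ => ?_
          rw [hid, Finset.mul_sum]
          exact Finset.sum_congr rfl fun c _ => by ring
      _ = ∑ c ∈ I, ∑ a : {x // x ∈ A}, ∑ b : {x // x ∈ A},
            (lam a * eval (fun i => (a : EuclideanSpace ℝ (Fin n)) i) (P c)) *
            (lam b * eval (fun i => (b : EuclideanSpace ℝ (Fin n)) i) (Q c)) := by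
          exact sum_comm3 _ _ _ _
      _ = ∑ c ∈ I, (∑ a : {x // x ∈ A}, lam a * eval (fun i => (a : EuclideanSpace ℝ (Fin n)) i) (P c)) *
            (∑ b : {x // x ∈ A}, lam b * eval (fun i => (b : EuclideanSpace ℝ (Fin n)) i) (Q c)) := by
          exact Finset.sum_congr rfl fun c _ => (Finset.sum_mul_sum _ _ _ _).symm
      _ = 0 := by
          refine Finset.sum_eq_zero fun c hc => ?_
          rcases hdeg c hc with h | h
          · rw [H _ h, zero_mul]
          · rw [H _ h, mul_zero]
  -- the annihilating polynomial
  set φ : Polynomial ℝ := ∏ d ∈ D, (Polynomial.C (d ^ 2) - Polynomial.X) with hφ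
  have hφdeg : φ.natDegree ≤ s := by
    refine le_trans (Polynomial.natDegree_prod_le _ _) (le_trans ?_ hDcard)
    calc ∑ d ∈ D, (Polynomial.C (d ^ 2) - Polynomial.X : Polynomial ℝ).natDegree
        ≤ ∑ _d ∈ D, 1 := by
          refine Finset.sum_le_sum fun d _ => ?_
          refine le_trans (Polynomial.natDegree_sub_le _ _) ?_
          simp
      _ = D.card := by simp
  -- key sum is zero by expansion of φ
  have key : ∑ a : {x // x ∈ A}, ∑ b : {x // x ∈ A},
      lam a * lam b * φ.eval (∑ i, ((a : EuclideanSpace ℝ (Fin n)) i - (b : EuclideanSpace ℝ (Fin n)) i) ^ 2) = 0 := by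
    calc ∑ a : {x // x ∈ A}, ∑ b : {x // x ∈ A},
          lam a * lam b * φ.eval (∑ i, ((a : EuclideanSpace ℝ (Fin n)) i - (b : EuclideanSpace ℝ (Fin n)) i) ^ 2)
        = ∑ a : {x // x ∈ A}, ∑ b : {x // x ∈ A}, ∑ j ∈ Finset.range (φ.natDegree + 1),
            φ.coeff j * (lam a * lam b *
              (∑ i, ((a : EuclideanSpace ℝ (Fin n)) i - (b : EuclideanSpace ℝ (Fin n)) i) ^ 2) ^ j) := by
          refine Finset.sum_congr rfl fun a _ => Finset.sum_congr rfl fun b _ => ?_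
          rw [Polynomial.eval_eq_sum_range, Finset.mul_sum]
          exact Finset.sum_congr rfl fun j _ => by ring
      _ = ∑ j ∈ Finset.range (φ.natDegree + 1), φ.coeff j * ∑ a : {x // x ∈ A}, ∑ b : {x // x ∈ A},
            lam a * lam b *
              (∑ i, ((a : EuclideanSpace ℝ (Fin n)) i - (b : EuclideanSpace ℝ (Fin n)) i) ^ 2) ^ j := by
          rw [sum_comm3]
          refine Finset.sum_congr rfl fun j _ => ?_
          rw [Finset.mul_sum]
          refine Finset.sum_congr rfl fun a _ => ?_
          rw [Finset.mul_sum]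
      _ = 0 := by
          refine Finset.sum_eq_zero fun j hj => ?_
          have hjs : j ≤ s := le_trans (Nat.lt_succ_iff.mp (Finset.mem_range.mp hj)) hφdeg
          rw [Z j hjs, mul_zero]
  -- values of φ
  have hdsq : ∀ a b : {x // x ∈ A},
      (∑ i, ((a : EuclideanSpace ℝ (Fin n)) i - (b : EuclideanSpace ℝ (Fin n)) i) ^ 2)
        = dist (a : EuclideanSpace ℝ (Fin n)) (b : EuclideanSpace ℝ (Fin n)) ^ 2 := by
    intro a b
    rw [EuclideanSpace.dist_eq, Real.sq_sqrt (by positivity)]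
    exact Finset.sum_congr rfl fun i _ => by rw [Real.dist_eq, sq_abs]
  have hoff : ∀ a b : {x // x ∈ A}, a ≠ b →
      φ.eval (∑ i, ((a : EuclideanSpace ℝ (Fin n)) i - (b : EuclideanSpace ℝ (Fin n)) i) ^ 2) = 0 := by
    intro a b hab
    have hdmem : dist (a : EuclideanSpace ℝ (Fin n)) (b : EuclideanSpace ℝ (Fin n)) ∈ D := by
      rw [hD, Set.Finite.mem_toFinset]
      exact ⟨a, a.2, b, b.2, fun h => hab (Subtype.ext h), rfl⟩
    rw [hφ, Polynomial.eval_prod]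
    refine Finset.prod_eq_zero hdmem ?_
    rw [hdsq a b]
    simp
  have hdiag : ∀ a : {x // x ∈ A},
      φ.eval (∑ i, ((a : EuclideanSpace ℝ (Fin n)) i - (a : EuclideanSpace ℝ (Fin n)) i) ^ 2)
        = ∏ d ∈ D, d ^ 2 := by
    intro a
    rw [hφ, Polynomial.eval_prod]
    refine Finset.prod_congr rfl fun d _ => ?_
    simp
  have key2 : ∑ a : {x // x ∈ A}, lam a ^ 2 * ∏ d ∈ D, d ^ 2 = 0 := by
    rw [← key]
    refine Finset.sum_congr rfl fun a _ => ?_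
    rw [Finset.sum_eq_single a]
    · rw [hdiag a]; ring
    · intro b _ hba
      rw [hoff a b (fun h => hba h.symm), mul_zero]
    · intro h; exact absurd (Finset.mem_univ a) h
  have hprodpos : 0 < ∏ d ∈ D, d ^ 2 := by
    refine Finset.prod_pos fun d hd => ?_
    rw [hD, Set.Finite.mem_toFinset] at hd
    obtain ⟨p, _, q, _, hpq, rfl⟩ := hd
    exact pow_pos (dist_pos.mpr hpq) 2
  funext a
  have := (Finset.sum_eq_zero_iff_of_nonneg (fun b _ => by positivity)).mp key2 a (Finset.mem_univ a)
  have h2 : lam a ^ 2 = 0 := by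
    rcases mul_eq_zero.mp this with h | h
    · exact h
    · exact absurd h hprodpos.ne'
  simpa using pow_eq_zero_iff (n := 2) (by norm_num) |>.mp h2

private lemma interp {n s : ℕ} (A : Finset (EuclideanSpace ℝ (Fin n)))
    (hA : (distSet (A : Set (EuclideanSpace ℝ (Fin n)))).ncard ≤ s)
    (v : {x // x ∈ A} → ℝ) :
    ∃ f : MvPolynomial (Fin n) ℝ, f.totalDegree ≤ s ∧
      ∀ a : {x // x ∈ A}, eval (fun i => (a : EuclideanSpace ℝ (Fin n)) i) f = v a := by
  classical
  set V := EuclideanSpace ℝ {x // x ∈ A}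
  set evL : MvPolynomial (Fin n) ℝ →ₗ[ℝ] V :=
    { toFun := fun f => WithLp.toLp 2 (fun a => eval (fun i => (a : EuclideanSpace ℝ (Fin n)) i) f)
      map_add' := by intro f g; ext a; show eval _ (f + g) = eval _ f + eval _ g; simp
      map_smul' := by intro c f; ext a; show eval _ (c • f) = c * eval _ f; simp [smul_eq_mul] } with hevL
  set K : Submodule ℝ V := (MvPolynomial.restrictTotalDegree (Fin n) ℝ s).map evL with hK
  have horth : Kᗮ = ⊥ := by
    rw [Submodule.eq_bot_iff]
    intro lam hlam
    refine (WithLp.ofLp_injective 2) (core A hA lam fun f hf => ?_)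
    have hmem : evL f ∈ K := ⟨f, (MvPolynomial.mem_restrictTotalDegree _ s f).mpr hf, rfl⟩
    have := (Submodule.mem_orthogonal K lam).mp hlam (evL f) hmem
    rw [PiLp.inner_apply] at this
    simp only [RCLike.inner_apply, starRingEnd_apply, star_trivial] at this
    rw [← this]
    exact Finset.sum_congr rfl fun a _ => by rfl
  have hKtop : K = ⊤ := Submodule.orthogonal_eq_bot_iff.mp horth
  have hv : (WithLp.toLp 2 v : V) ∈ K := hKtop ▸ Submodule.mem_top
  obtain ⟨f, hf, hfv⟩ := hv
  exact ⟨f, (MvPolynomial.mem_restrictTotalDegree _ s f).mp hf,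
    fun a => congrArg (fun w : V => w a) hfv⟩

private lemma supsum {n : ℕ} (m : Fin n →₀ ℕ) : ∑ i ∈ m.support, m i = ∑ i, m i :=
  Finset.sum_subset (Finset.subset_univ _) fun i _ hi => Finsupp.notMem_support_iff.mp hi

/-- For a finite `s`-distance set `A ⊆ ℝ^n`, every deglex standard monomial of the
vanishing ideal `I(A)` has degree at most `s`. -/
theorem standard_monomials_of_sdist_set {n s : ℕ}
    (A : Finset (EuclideanSpace ℝ (Fin n)))
    (hA : (distSet (A : Set (EuclideanSpace ℝ (Fin n)))).ncard ≤ s) :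
    ∀ m : Fin n →₀ ℕ,
      (¬ ∃ f : MvPolynomial (Fin n) ℝ, f ≠ 0 ∧
          (∀ a ∈ A, eval (fun i => a i) f = 0) ∧ IsLeadingMonomial degLexLT f m) →
      (∑ i, m i) ≤ s := by
  intro m hm
  by_contra hcon
  push_neg at hcon
  obtain ⟨f₀, hdeg, hval⟩ := interp A hA
    (fun a => eval (fun i => (a : EuclideanSpace ℝ (Fin n)) i) (monomial m (1 : ℝ)))
  set f : MvPolynomial (Fin n) ℝ := monomial m 1 - f₀ with hf
  have hcoeffm0 : coeff m f₀ = 0 :=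
    coeff_eq_zero_of_totalDegree_lt (by rw [supsum]; exact lt_of_le_of_lt hdeg hcon)
  have hcoeffm : coeff m f = 1 := by
    rw [hf, coeff_sub, coeff_monomial, hcoeffm0, if_pos rfl, sub_zero]
  refine hm ⟨f, ?_, ?_, ?_, ?_⟩
  · intro h
    rw [h, coeff_zero] at hcoeffm
    exact one_ne_zero hcoeffm.symm
  · intro a ha
    have := hval ⟨a, ha⟩
    rw [hf, map_sub, this, sub_self]
  · exact mem_support_iff.mpr (by rw [hcoeffm]; exact one_ne_zero)
  · intro m' hm' hne
    left
    have hc' : coeff m' f₀ ≠ 0 := by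
      intro h
      rw [mem_support_iff, hf, coeff_sub, coeff_monomial, if_neg (fun h' => hne h'.symm),
        h, zero_sub, neg_zero] at hm'
      exact hm' rfl
    have : (∑ i, m' i) ≤ f₀.totalDegree := by
      rw [← supsum]
      exact le_totalDegree (mem_support_iff.mpr hc')
    exact lt_of_le_of_lt (this.trans hdeg) hcon
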